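/- For each n ∈ ℕ let q_n = 2^{2^n} and Γ_n = (ℤ/2ℤ)^{q_n}, with the natural inclusions Γ_n ↪ Γ_{n+1}. Let T be the Bass–Serre tree of the ray of groups with vertex groups Γ_0, Γ_1, Γ_2, … and edge groups Γ_0, Γ_1, … (edge between the n-th and (n+1)-st vertex carrying Γ_n, with monomorphisms the identity into Γ_n and the inclusion into Γ_{n+1}), and let Γ be its fundamental group. Then for a vertex x₀ of T above the origin, the ball B(x₀, 2n) contains at least q_{n−1} − 1 points of the orbit Γx₀, and consequently the critical exponent δ_Γ = +∞. -/

import Mathlib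

open SimpleGraph

private lemma nat_two_mul_add_two_le (n : ℕ) (hn : 4 ≤ n) : 2 * n + 2 ≤ 2 ^ n := by
  induction n, hn using Nat.le_induction with
  | base => norm_num
  | succ n hn ih =>
    have h2 : 2 ≤ 2 ^ n := Nat.one_lt_two_pow_iff.mpr (by omega)
    calc 2 * (n + 1) + 2 = (2 * n + 2) + 2 := by ring
      _ ≤ 2 ^ n + 2 ^ n := by omega
      _ = 2 ^ (n + 1) := by rw [pow_succ]; ring

private lemma nat_mul_le_two_pow_two_pow (M n : ℕ) (hM : M ≤ n) (hn : 4 ≤ n) :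
    M * (n + 1) ≤ 2 ^ 2 ^ n := by
  have h1 : n + 1 ≤ 2 ^ (n + 1) := (Nat.lt_two_pow_self (n := n + 1)).le
  calc M * (n + 1) ≤ (n + 1) * (n + 1) := Nat.mul_le_mul (by omega) le_rfl
    _ ≤ 2 ^ (n + 1) * 2 ^ (n + 1) := Nat.mul_le_mul h1 h1
    _ = 2 ^ (2 * n + 2) := by rw [← pow_add]; ring_nf
    _ ≤ 2 ^ 2 ^ n := Nat.pow_le_pow_right (by norm_num) (nat_two_mul_add_two_le n hn)

section Graph

variable {V : Type*} {G : SimpleGraph V} {Γ : Type*} [Group Γ] [MulAction Γ V]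

private lemma dist_smul_eq (hconn : G.Connected)
    (hAdj : ∀ (γ : Γ) (u v : V), G.Adj u v → G.Adj (γ • u) (γ • v))
    (γ : Γ) (u v : V) : G.dist (γ • u) (γ • v) = G.dist u v := by
  have key : ∀ (δ : Γ) (a b : V), G.dist (δ • a) (δ • b) ≤ G.dist a b := by
    intro δ a b
    obtain ⟨p, hp⟩ := hconn.exists_walk_length_eq_dist a b
    have h := SimpleGraph.dist_le
      (p.map ⟨fun w => δ • w, fun h => hAdj δ _ _ h⟩)
    rwa [SimpleGraph.Walk.length_map, hp] at h
  refine le_antisymm (key γ u v) ?_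
  have h := key γ⁻¹ (γ • u) (γ • v)
  simpa using h

private lemma ball_finite (hconn : G.Connected) [G.LocallyFinite] (x₀ : V) :
    ∀ m : ℕ, {v : V | G.dist x₀ v ≤ m}.Finite := by
  intro m
  induction m with
  | zero =>
    refine Set.Finite.subset (Set.finite_singleton x₀) ?_
    intro v hv
    simp only [Set.mem_setOf_eq, Nat.le_zero] at hv
    exact Set.mem_singleton_iff.mpr (hconn.dist_eq_zero_iff.mp hv).symm
  | succ m ih =>
    have hsub : {v : V | G.dist x₀ v ≤ m + 1} ⊆
        {v : V | G.dist x₀ v ≤ m} ∪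
          ⋃ u ∈ {v : V | G.dist x₀ v ≤ m}, G.neighborSet u := by
      intro v hv
      simp only [Set.mem_setOf_eq] at hv
      rcases Nat.lt_or_ge (G.dist x₀ v) (m + 1) with h | h
      · exact Or.inl (Nat.lt_succ_iff.mp h)
      · have hd : G.dist x₀ v = m + 1 := le_antisymm hv h
        have hvx : v ≠ x₀ := by
          intro e
          rw [e, SimpleGraph.dist_self] at hd
          omega
        obtain ⟨p, hp⟩ := hconn.exists_walk_length_eq_dist x₀ v
        rw [hd] at hp
        obtain ⟨u, h', q, hq⟩ := SimpleGraph.Walk.exists_eq_cons_of_ne hvx p.reverse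
        have hql : q.length = m := by
          have h2 := congrArg SimpleGraph.Walk.length hq
          rw [SimpleGraph.Walk.length_reverse, hp,
            SimpleGraph.Walk.length_cons] at h2
          omega
        have hu : G.dist x₀ u ≤ m := by
          have h3 := SimpleGraph.dist_le q.reverse
          rwa [SimpleGraph.Walk.length_reverse, hql] at h3
        exact Or.inr (Set.mem_biUnion hu h'.symm)
    exact Set.Finite.subset
      (ih.union (ih.biUnion fun u _ => (G.neighborSet u).toFinite)) hsub

end Graph

/-- Nagao-type example: let `Γ` be the fundamental group of the ray of groups
with vertex groups `Γₙ = (ℤ/2ℤ)^{qₙ}`, `qₙ = 2^{2ⁿ}`, acting on the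
Bass–Serre tree `T`.  The Bass–Serre data are encoded by: a geodesic ray `x`
from `x₀` lifting the ray, nested vertex stabilizers along it, with
`|Γ_{xₙ}| = 2^{qₙ} = 2^{2^{2ⁿ}}`, and pointwise stabilizer of the initial
segment of cardinality at most `|Γ₀| = 2^{q₀} = 4`.  Then the ball `B(x₀,2n)`
contains at least `q_{n-1} − 1 = 2^{2^{n-1}} − 1` points of the orbit `Γx₀`,
and consequently the critical exponent of `Γ` is `+∞`: the Poincaré series
diverges for every `s`. -/
theorem stmt_16 {V : Type*} (G : SimpleGraph V) (hT : G.IsTree) [G.LocallyFinite]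
    (Γ : Type*) [Group Γ] [MulAction Γ V]
    (hAdj : ∀ (γ : Γ) (u v : V), G.Adj u v → G.Adj (γ • u) (γ • v))
    (x₀ : V) (x : ℕ → V) (hx0 : x 0 = x₀)
    (hadj : ∀ n, G.Adj (x n) (x (n + 1)))
    (hgeo : ∀ n, G.dist x₀ (x n) = n)
    (hnest : ∀ n, MulAction.stabilizer Γ (x n) ≤ MulAction.stabilizer Γ (x (n + 1)))
    (hcard : ∀ n, Nat.card (MulAction.stabilizer Γ (x n)) = 2 ^ 2 ^ 2 ^ n)
    (hseg : ∀ n, Nat.card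
      ↥(MulAction.stabilizer Γ x₀ ⊓ MulAction.stabilizer Γ (x n)) ≤ 2 ^ 2 ^ 2 ^ 0) :
    (∀ n : ℕ, 1 ≤ n →
      2 ^ 2 ^ (n - 1) - 1 ≤
        Nat.card {v : V // v ∈ MulAction.orbit Γ x₀ ∧ G.dist x₀ v ≤ 2 * n}) ∧
    ∀ s : ℝ, ¬ Summable (fun γ : Γ => Real.exp (-s * (G.dist x₀ (γ • x₀) : ℝ))) := by
  have hconn : G.Connected := hT.isConnected
  -- distance bound for stabilizer elements
  have hdistb : ∀ (n : ℕ) (γ : Γ), γ ∈ MulAction.stabilizer Γ (x n) →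
      G.dist x₀ (γ • x₀) ≤ 2 * n := by
    intro n γ hγ
    have h1 : G.dist x₀ (γ • x₀) ≤ G.dist x₀ (x n) + G.dist (x n) (γ • x₀) :=
      hconn.dist_triangle
    have h2 : G.dist (x n) (γ • x₀) = G.dist x₀ (x n) := by
      have := dist_smul_eq hconn hAdj γ (x n) x₀
      rw [MulAction.mem_stabilizer_iff.mp hγ] at this
      rw [this, SimpleGraph.dist_comm]
    rw [h2, hgeo n] at h1
    omega
  -- stabilizers are finite
  have hfinstab : ∀ n, Finite (MulAction.stabilizer Γ (x n)) := by
    intro n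
    refine Nat.finite_of_card_ne_zero ?_
    rw [hcard n]; positivity
  constructor
  · -- ball counting
    intro n hn
    set H := MulAction.stabilizer Γ (x n) with hH
    have hfinH : Finite H := hfinstab n
    -- the ball subtype is finite
    have hballfin : Finite {v : V // v ∈ MulAction.orbit Γ x₀ ∧ G.dist x₀ v ≤ 2 * n} := by
      have hb := ball_finite hconn x₀ (2 * n)
      have : Finite {v : V // G.dist x₀ v ≤ 2 * n} := hb.to_subtype
      exact Finite.of_injective
        (fun v => (⟨v.1, v.2.2⟩ : {v : V // G.dist x₀ v ≤ 2 * n}))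
        (by intro a b hab
            simp only [Subtype.mk.injEq] at hab
            exact Subtype.ext hab)
    -- orbit-stabilizer for H acting on V
    have horbstab : Nat.card H =
        Nat.card (MulAction.orbit H x₀) * Nat.card (MulAction.stabilizer H x₀) := by
      rw [Subgroup.card_eq_card_quotient_mul_card_subgroup (MulAction.stabilizer H x₀)]
      congr 1
      exact (Nat.card_congr (MulAction.orbitEquivQuotientStabilizer H x₀)).symm
    -- stabilizer of x₀ in H is small
    have hstabsmall : Nat.card (MulAction.stabilizer H x₀) ≤ 4 := by
      have hf : Finite ↥(MulAction.stabilizer Γ x₀ ⊓ MulAction.stabilizer Γ (x n)) :=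
        Finite.of_injective (Subgroup.inclusion inf_le_right)
          (Subgroup.inclusion_injective inf_le_right)
      have hinj : Function.Injective
          (fun h : MulAction.stabilizer H x₀ =>
            (⟨(h.1 : Γ), ⟨h.2, h.1.2⟩⟩ :
              ↥(MulAction.stabilizer Γ x₀ ⊓ MulAction.stabilizer Γ (x n)))) := by
        intro a b hab
        simp only [Subtype.mk.injEq] at hab
        exact Subtype.ext (Subtype.ext (congrArg (fun y : ↥(MulAction.stabilizer Γ x₀ ⊓ MulAction.stabilizer Γ (x n)) => (y : Γ)) hab))
      have := Nat.card_le_card_of_injective _ hinj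
      calc Nat.card (MulAction.stabilizer H x₀)
          ≤ Nat.card ↥(MulAction.stabilizer Γ x₀ ⊓ MulAction.stabilizer Γ (x n)) := this
        _ ≤ 2 ^ 2 ^ 2 ^ 0 := hseg n
        _ = 4 := by norm_num
    -- orbit of x₀ under H is large
    have horbit : 2 ^ (2 ^ 2 ^ n - 2) ≤ Nat.card (MulAction.orbit H x₀) := by
      have key : Nat.card (MulAction.orbit H x₀) * 4 ≥ 2 ^ 2 ^ 2 ^ n := by
        calc 2 ^ 2 ^ 2 ^ n = Nat.card H := (hcard n).symm
          _ = Nat.card (MulAction.orbit H x₀) * Nat.card (MulAction.stabilizer H x₀) :=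
            horbstab
          _ ≤ Nat.card (MulAction.orbit H x₀) * 4 :=
            Nat.mul_le_mul le_rfl hstabsmall
      have hexp : 2 ^ (2 ^ 2 ^ n - 2) * 4 = 2 ^ 2 ^ 2 ^ n := by
        have h2 : 2 ≤ 2 ^ 2 ^ n := Nat.one_lt_two_pow_iff.mpr (by positivity)
        rw [show (4 : ℕ) = 2 ^ 2 by norm_num, ← pow_add]
        congr 1
        omega
      have := key
      rw [← hexp] at this
      exact Nat.le_of_mul_le_mul_right this (by norm_num)
    -- inject the orbit into the ball subtype
    have hinj2 : 2 ^ (2 ^ 2 ^ n - 2) ≤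
        Nat.card {v : V // v ∈ MulAction.orbit Γ x₀ ∧ G.dist x₀ v ≤ 2 * n} := by
      refine le_trans horbit (Nat.card_le_card_of_injective
        (fun v => ⟨v.1, ?_, ?_⟩) ?_)
      · obtain ⟨h, hh⟩ := v.2
        exact ⟨(h : Γ), hh⟩
      · obtain ⟨h, hh⟩ := v.2
        rw [← hh]
        exact hdistb n (h : Γ) h.2
      · intro a b hab
        simp only [Subtype.mk.injEq] at hab
        exact Subtype.ext hab
    refine le_trans ?_ hinj2
    have hle : 2 ^ (n - 1) ≤ 2 ^ 2 ^ n - 2 := by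
      have h1 : n + 1 ≤ 2 ^ n := Nat.lt_two_pow_self (n := n)
      have h2 : 2 ^ (n + 1) ≤ 2 ^ 2 ^ n := Nat.pow_le_pow_right (by norm_num) h1
      have h3 : (1 : ℕ) ≤ 2 ^ (n - 1) := Nat.one_le_two_pow
      have h4 : 2 ^ (n + 1) = 4 * 2 ^ (n - 1) := by
        rw [show n + 1 = (n - 1) + 2 by omega, pow_add]
        ring
      omega
    calc 2 ^ 2 ^ (n - 1) - 1 ≤ 2 ^ 2 ^ (n - 1) := Nat.sub_le _ _
      _ ≤ 2 ^ (2 ^ 2 ^ n - 2) := Nat.pow_le_pow_right (by norm_num) hle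
  · -- divergence of the Poincaré series
    intro s hS
    set f : Γ → ℝ := fun γ => Real.exp (-s * (G.dist x₀ (γ • x₀) : ℝ)) with hf
    have hfnn : ∀ γ, 0 ≤ f γ := fun γ => (Real.exp_pos _).le
    set C := ∑' γ, f γ with hC
    -- lower bound for partial sums over stabilizers
    have hlow : ∀ n : ℕ, (2 ^ 2 ^ 2 ^ n : ℝ) * Real.exp (-(2 * n) * |s|) ≤ C := by
      intro n
      have hfinH : Finite (MulAction.stabilizer Γ (x n)) := hfinstab n
      have hsetfin : ((MulAction.stabilizer Γ (x n) : Set Γ)).Finite := by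
        exact Set.toFinite _
      set F := hsetfin.toFinset with hF
      have hFcard : F.card = 2 ^ 2 ^ 2 ^ n := by
        rw [hF, ← Set.ncard_eq_toFinset_card _ hsetfin, ← Nat.card_coe_set_eq,
          SetLike.coe_sort_coe]
        exact hcard n
      have hterm : ∀ γ ∈ F, Real.exp (-(2 * n) * |s|) ≤ f γ := by
        intro γ hγ
        rw [hF, Set.Finite.mem_toFinset] at hγ
        have hd : G.dist x₀ (γ • x₀) ≤ 2 * n := hdistb n γ hγ
        rw [hf]
        apply Real.exp_le_exp.mpr
        have hd' : (G.dist x₀ (γ • x₀) : ℝ) ≤ 2 * n := by exact_mod_cast hd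
        have hd0 : (0 : ℝ) ≤ (G.dist x₀ (γ • x₀) : ℝ) := Nat.cast_nonneg _
        have step1 : -(2 * (n : ℝ)) * |s| ≤ -(G.dist x₀ (γ • x₀) : ℝ) * |s| := by
          nlinarith [mul_nonneg (sub_nonneg.mpr hd') (abs_nonneg s)]
        calc -(2 * (n : ℝ)) * |s| ≤ -(G.dist x₀ (γ • x₀) : ℝ) * |s| := step1
          _ ≤ -s * (G.dist x₀ (γ • x₀) : ℝ) := by
            rcases le_or_gt 0 s with hs | hs
            · rw [abs_of_nonneg hs]; nlinarith
            · rw [abs_of_neg hs]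
              nlinarith [mul_nonneg hd0 (neg_nonneg.mpr hs.le)]
      have hsum : F.card • Real.exp (-(2 * n) * |s|) ≤ ∑ γ ∈ F, f γ :=
        Finset.card_nsmul_le_sum F f _ hterm
      have htsum : ∑ γ ∈ F, f γ ≤ C := Summable.sum_le_tsum F (fun γ _ => hfnn γ) hS
      rw [hFcard] at hsum
      calc (2 ^ 2 ^ 2 ^ n : ℝ) * Real.exp (-(2 * n) * |s|)
          = (2 ^ 2 ^ 2 ^ n : ℕ) • Real.exp (-(2 * n) * |s|) := by
            rw [nsmul_eq_mul]; norm_num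
        _ ≤ ∑ γ ∈ F, f γ := hsum
        _ ≤ C := htsum
    -- derive a contradiction
    set b := Real.exp (2 * |s|) with hb
    have hb1 : 1 ≤ b := Real.one_le_exp (by positivity)
    obtain ⟨M, hM⟩ := pow_unbounded_of_one_lt (max C b) (one_lt_two (α := ℝ))
    have hCM : C < 2 ^ M := lt_of_le_of_lt (le_max_left _ _) hM
    have hbM : b < 2 ^ M := lt_of_le_of_lt (le_max_right _ _) hM
    -- choose n large
    set n := max M 4 with hn
    have hkey : (2 : ℝ) ^ (2 ^ 2 ^ n : ℕ) ≤ C * b ^ n := by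
      have h1 := hlow n
      have h2 : Real.exp (-(2 * n) * |s|) = (b ^ n)⁻¹ := by
        rw [hb, ← Real.exp_nat_mul]
        rw [← Real.exp_neg]
        congr 1
        push_cast
        ring
      rw [h2] at h1
      have hbn : (0 : ℝ) < b ^ n := pow_pos (lt_of_lt_of_le one_pos hb1) n
      have h3 := mul_le_mul_of_nonneg_right h1 hbn.le
      calc (2 : ℝ) ^ (2 ^ 2 ^ n : ℕ)
          = (2 : ℝ) ^ (2 ^ 2 ^ n : ℕ) * (b ^ n)⁻¹ * b ^ n := by field_simp
        _ ≤ C * b ^ n := h3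
    have hbig : C * b ^ n < (2 : ℝ) ^ (2 ^ 2 ^ n : ℕ) := by
      have hb0 : (0 : ℝ) ≤ b := le_trans zero_le_one hb1
      have h1 : C * b ^ n < 2 ^ M * (2 ^ M) ^ n := by
        have hC0 : 0 < C := by
          have h0 := hlow 0
          have hp : (0 : ℝ) < 2 ^ 2 ^ 2 ^ 0 * Real.exp (-(2 * (0 : ℕ)) * |s|) := by
            positivity
          linarith
        have : b ^ n ≤ (2 ^ M : ℝ) ^ n := pow_le_pow_left₀ hb0 hbM.le n
        nlinarith [pow_pos (lt_of_lt_of_le one_pos hb1) n,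
          pow_pos (show (0:ℝ) < 2 ^ M by positivity) n]
      have h2 : (2 : ℝ) ^ M * ((2 : ℝ) ^ M) ^ n = 2 ^ (M * (n + 1)) := by
        rw [← pow_mul, ← pow_add]
        congr 1
        ring
      have h3 : (M * (n + 1) : ℕ) ≤ 2 ^ 2 ^ n :=
        nat_mul_le_two_pow_two_pow M n (le_max_left _ _) (le_max_right _ _)
      have h4 : (2 : ℝ) ^ (M * (n + 1)) ≤ 2 ^ (2 ^ 2 ^ n : ℕ) :=
        pow_le_pow_right₀ one_le_two h3
      calc C * b ^ n < 2 ^ M * (2 ^ M) ^ n := h1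
        _ = 2 ^ (M * (n + 1)) := h2
        _ ≤ (2 : ℝ) ^ (2 ^ 2 ^ n : ℕ) := h4
    exact absurd hkey (not_le.mpr hbig)
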